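/- For every infinite set Λ ⊆ ℕ, every g ∈ C(𝕋), every c ∈ ℂ, and every ε > 0, there exist f ∈ C(𝕋) and n ∈ Λ with ‖f − g‖_∞ < ε and sₙf(0) = c. -/

import Mathlib

open MeasureTheory Complex Filter Topology Set TopologicalSpace

noncomputable section

instance : Fact (0 < 2 * Real.pi) := ⟨by positivity⟩

/-- The unit circle ℝ/2πℤ. -/
abbrev UnitCircle := AddCircle (2 * Real.pi)

/-- The n-th partial sum of the Fourier series of `f`. -/
noncomputable def partialSum (n : ℕ) (f : UnitCircle → ℂ) : C(UnitCircle, ℂ) :=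
  ∑ k ∈ Finset.Icc (-(n : ℤ)) (n : ℤ), fourierCoeff f k • fourier k

section Aux

open Real Finset AddCircle

lemma abel_bound (a : ℕ → ℂ) (b : ℕ → ℝ) (B : ℝ) (hb0 : ∀ k, 0 ≤ b k)
    (hba : ∀ k, b (k+1) ≤ b k) (hA : ∀ m, ‖∑ j ∈ Finset.range m, a j‖ ≤ B) (n : ℕ) :
    ‖∑ j ∈ Finset.range n, (b j : ℂ) * a j‖ ≤ B * b 0 := by
  have hB : 0 ≤ B := le_trans (norm_nonneg _) (hA 1)
  rcases Nat.eq_zero_or_pos n with rfl | hn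
  · simpa using mul_nonneg hB (hb0 0)
  have key := Finset.sum_range_by_parts (fun i => (b i : ℂ)) a n
  simp only [smul_eq_mul] at key
  rw [key]
  have h1 : ‖(b (n-1) : ℂ) * ∑ i ∈ range n, a i‖ ≤ b (n-1) * B := by
    rw [norm_mul, Complex.norm_real, Real.norm_eq_abs, _root_.abs_of_nonneg (hb0 _)]
    exact mul_le_mul_of_nonneg_left (hA n) (hb0 _)
  have h2 : ‖∑ i ∈ range (n-1), ((b (i+1) : ℂ) - b i) * ∑ j ∈ range (i+1), a j‖
      ≤ ∑ i ∈ range (n-1), (b i - b (i+1)) * B := by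
    refine (norm_sum_le _ _).trans (Finset.sum_le_sum fun i _ => ?_)
    rw [norm_mul, ← Complex.ofReal_sub, Complex.norm_real, Real.norm_eq_abs,
      abs_of_nonpos (by linarith [hba i]), neg_sub]
    exact mul_le_mul (le_refl _) (hA _) (norm_nonneg _) (by linarith [hba i, hb0 (i+1)])
  calc ‖_ - _‖ ≤ ‖(b (n-1) : ℂ) * ∑ i ∈ range n, a i‖
        + ‖∑ i ∈ range (n-1), ((b (i+1) : ℂ) - b i) * ∑ j ∈ range (i+1), a j‖ :=
        norm_sub_le _ _
    _ ≤ b (n-1) * B + ∑ i ∈ range (n-1), (b i - b (i+1)) * B := add_le_add h1 h2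
    _ = b (n-1) * B + (b 0 - b (n-1)) * B := by rw [← Finset.sum_mul, Finset.sum_range_sub']
    _ = B * b 0 := by ring

lemma norm_exp_sub_one (y : ℝ) : ‖Complex.exp (y * I) - 1‖ = 2 * |Real.sin (y/2)| := by
  have h : Complex.exp (y * I) - 1
      = Complex.exp ((y/2 : ℝ) * I) * (2 * I * Complex.sin ((y/2 : ℝ) : ℂ)) := by
    have key : ∀ A B : ℂ, 2*I*((A-B)*I/2) = B - A := by
      intro A B; linear_combination (A - B) * Complex.I_mul_I
    rw [Complex.sin]
    push_cast
    rw [key, mul_sub, ← Complex.exp_add, ← Complex.exp_add]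
    have e1 : (y:ℂ)/2 * I + -(y/2) * I = 0 := by ring
    have e2 : (y:ℂ)/2 * I + y/2 * I = y * I := by ring
    rw [e1, e2, Complex.exp_zero]
  rw [h, norm_mul, Complex.norm_exp_ofReal_mul_I, one_mul,
    ← Complex.ofReal_sin, norm_mul, norm_mul, Complex.norm_real]
  simp [Real.norm_eq_abs]

lemma norm_exp_sub_one_ge (y : ℝ) (hy : |y| ≤ π) : 2/π * |y| ≤ ‖Complex.exp (y * I) - 1‖ := by
  rw [norm_exp_sub_one]
  have h1 : |Real.sin (y/2)| = Real.sin (|y|/2) := by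
    rcases le_or_gt 0 y with h | h
    · rw [_root_.abs_of_nonneg h, _root_.abs_of_nonneg]
      exact Real.sin_nonneg_of_nonneg_of_le_pi (by positivity)
        (by rw [_root_.abs_of_nonneg h] at hy; linarith)
    · rw [abs_of_neg h]
      have : Real.sin (y/2) = - Real.sin (-y/2) := by rw [neg_div, Real.sin_neg, neg_neg]
      rw [this, abs_neg, _root_.abs_of_nonneg]
      exact Real.sin_nonneg_of_nonneg_of_le_pi (by linarith)
        (by rw [abs_of_neg h] at hy; linarith)
  rw [h1]
  have := Real.mul_le_sin (x := |y|/2) (by positivity) (by linarith)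
  calc 2/π * |y| = 2 * (2/π * (|y|/2)) := by ring
    _ ≤ 2 * Real.sin (|y|/2) := by linarith

lemma exp_ne_one (y : ℝ) (hy0 : y ≠ 0) (hy : |y| ≤ π) : Complex.exp (y * I) ≠ 1 := by
  intro h
  rw [Complex.exp_eq_one_iff] at h
  obtain ⟨n, hn⟩ := h
  have h2 : (y:ℂ) * I = (((n : ℝ) * (2*π) : ℝ) : ℂ) * I := by rw [hn]; push_cast; ring
  have h3 : (y:ℂ) = (((n:ℝ)*(2*π) : ℝ) : ℂ) := mul_right_cancel₀ Complex.I_ne_zero h2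
  have hy2 : y = n * (2*π) := by exact_mod_cast h3
  have hπ : 0 < π := Real.pi_pos
  rcases eq_or_ne n 0 with h0 | h0
  · exact hy0 (by simp [hy2, h0])
  · have h1n : (1:ℝ) ≤ |(n:ℝ)| := by exact_mod_cast Int.one_le_abs h0
    have : 2 * π ≤ |y| := by
      rw [hy2, abs_mul, _root_.abs_of_nonneg (by positivity : (0:ℝ) ≤ 2*π)]
      nlinarith
    linarith

lemma tail_bound (y : ℝ) (hy0 : y ≠ 0) (hy : |y| ≤ π) (m n : ℕ) :
    ‖∑ j ∈ Finset.range n, (((m+j+1 : ℕ) : ℂ))⁻¹ * Complex.exp ((m+j+1 : ℕ) * y * I)‖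
      ≤ (2 / ‖Complex.exp (y * I) - 1‖) * ((m+1 : ℝ))⁻¹ := by
  have hr1 : Complex.exp (y * I) ≠ 1 := exp_ne_one y hy0 hy
  have hA : ∀ M : ℕ, ‖∑ j ∈ Finset.range M, Complex.exp ((m+j+1 : ℕ) * y * I)‖
      ≤ 2 / ‖Complex.exp (y * I) - 1‖ := by
    intro M
    have hterm : ∀ j : ℕ, Complex.exp ((m+j+1 : ℕ) * y * I)
        = Complex.exp ((m+1 : ℕ) * y * I) * (Complex.exp (y * I)) ^ j := by
      intro j
      rw [← Complex.exp_nat_mul, ← Complex.exp_add]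
      push_cast
      ring_nf
    simp_rw [hterm]
    rw [← Finset.mul_sum, norm_mul, geom_sum_eq hr1]
    have h1 : ‖Complex.exp ((m+1 : ℕ) * y * I)‖ = 1 := by
      push_cast
      rw [show ((m:ℂ)+1) * y * I = (((m+1 : ℝ)) * y : ℝ) * I by push_cast; ring]
      exact Complex.norm_exp_ofReal_mul_I _
    rw [h1, one_mul, norm_div]
    gcongr
    calc ‖Complex.exp (y*I) ^ M - 1‖ ≤ ‖Complex.exp (y*I) ^ M‖ + 1 := by
          simpa using norm_sub_le (Complex.exp (y*I) ^ M) 1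
      _ ≤ 2 := by
          rw [norm_pow, Complex.norm_exp_ofReal_mul_I, one_pow]
          norm_num
  have hb0 : ∀ k : ℕ, (0:ℝ) ≤ ((m+k+1 : ℕ) : ℝ)⁻¹ := fun k => by positivity
  have hba : ∀ k : ℕ, ((m+(k+1)+1 : ℕ) : ℝ)⁻¹ ≤ ((m+k+1 : ℕ) : ℝ)⁻¹ := by
    intro k
    apply inv_anti₀ (by positivity)
    push_cast; linarith
  have := abel_bound (fun j => Complex.exp ((m+j+1 : ℕ) * y * I))
    (fun j => ((m+j+1 : ℕ) : ℝ)⁻¹) (2 / ‖Complex.exp (y * I) - 1‖) hb0 hba hA n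
  convert this using 3 with j hj
  · push_cast; simp
  · push_cast; ring

lemma key (x : ℝ) (hx : |x| ≤ π) (n : ℕ) :
    ‖∑ k ∈ Finset.range n, (((k+1 : ℕ)):ℂ)⁻¹ *
      (Complex.exp ((k+1 : ℕ) * (-x) * I) - Complex.exp ((k+1 : ℕ) * x * I))‖ ≤ 2 + 4*π := by
  have hπ : 0 < π := Real.pi_pos
  rcases eq_or_ne x 0 with rfl | hx0
  · simp
    positivity
  have hxpos : 0 < |x| := abs_pos.mpr hx0
  have hterm : ∀ k : ℕ, ‖(((k+1 : ℕ)):ℂ)⁻¹ *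
      (Complex.exp ((k+1 : ℕ) * (-x) * I) - Complex.exp ((k+1 : ℕ) * x * I))‖ ≤ 2 * |x| := by
    intro k
    have e1 : ((k+1 : ℕ) : ℂ) * (-x) * I = ((((k+1 : ℕ) : ℝ) * (-x) : ℝ) : ℂ) * I := by
      push_cast; ring
    have e2 : ((k+1 : ℕ) : ℂ) * x * I = ((((k+1 : ℕ) : ℝ) * x : ℝ) : ℂ) * I := by
      push_cast; ring
    rw [norm_mul, e1, e2]
    have hd : ‖Complex.exp ((((k+1 : ℕ) : ℝ) * (-x) : ℝ) * I) -
        Complex.exp ((((k+1 : ℕ) : ℝ) * x : ℝ) * I)‖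
        ≤ 2 * ((k+1 : ℕ) : ℝ) * |x| := by
      have b1 := norm_exp_sub_one (((k+1 : ℕ) : ℝ) * (-x))
      have b2 := norm_exp_sub_one (((k+1 : ℕ) : ℝ) * x)
      have s1 : |Real.sin (((k+1 : ℕ) : ℝ) * (-x) / 2)| ≤ ((k+1 : ℕ) : ℝ) * |x| / 2 := by
        refine (Real.abs_sin_le_abs).trans ?_
        rw [abs_div, abs_mul, abs_neg, Nat.abs_cast]
        simp
      have s2 : |Real.sin (((k+1 : ℕ) : ℝ) * x / 2)| ≤ ((k+1 : ℕ) : ℝ) * |x| / 2 := by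
        refine (Real.abs_sin_le_abs).trans ?_
        rw [abs_div, abs_mul, Nat.abs_cast]
        simp
      calc ‖_ - _‖ ≤ ‖Complex.exp ((((k+1 : ℕ) : ℝ) * (-x) : ℝ) * I) - 1‖ +
            ‖Complex.exp ((((k+1 : ℕ) : ℝ) * x : ℝ) * I) - 1‖ := by
            have := norm_sub_le (Complex.exp ((((k+1 : ℕ) : ℝ) * (-x) : ℝ) * I) - 1)
              (Complex.exp ((((k+1 : ℕ) : ℝ) * x : ℝ) * I) - 1)
            simpa using this
        _ ≤ 2 * (((k+1 : ℕ) : ℝ) * |x| / 2) + 2 * (((k+1 : ℕ) : ℝ) * |x| / 2) := by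
            rw [b1, b2]; gcongr
        _ = 2 * ((k+1 : ℕ) : ℝ) * |x| := by ring
    have hninv : ‖(((k+1 : ℕ)):ℂ)⁻¹‖ = ((k+1 : ℕ) : ℝ)⁻¹ := by
      rw [norm_inv, Complex.norm_natCast]
    rw [hninv]
    calc ((k+1 : ℕ) : ℝ)⁻¹ * ‖_ - _‖ ≤ ((k+1 : ℕ) : ℝ)⁻¹ * (2 * ((k+1 : ℕ) : ℝ) * |x|) := by
          gcongr
      _ = 2 * |x| := by
          field_simp
  have hhead : ∀ M : ℕ, ‖∑ k ∈ Finset.range M, (((k+1 : ℕ)):ℂ)⁻¹ *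
      (Complex.exp ((k+1 : ℕ) * (-x) * I) - Complex.exp ((k+1 : ℕ) * x * I))‖
      ≤ 2 * M * |x| := by
    intro M
    calc ‖_‖ ≤ ∑ k ∈ Finset.range M, ‖(((k+1 : ℕ)):ℂ)⁻¹ *
          (Complex.exp ((k+1 : ℕ) * (-x) * I) - Complex.exp ((k+1 : ℕ) * x * I))‖ :=
          norm_sum_le _ _
      _ ≤ ∑ _k ∈ Finset.range M, 2 * |x| := Finset.sum_le_sum fun k _ => hterm k
      _ = 2 * M * |x| := by rw [Finset.sum_const, Finset.card_range]; push_cast; ring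
  set K := ⌈1/|x|⌉₊ with hK
  have hKle : (K : ℝ) ≤ 1/|x| + 1 := le_of_lt (Nat.ceil_lt_add_one (by positivity))
  have hKge : 1/|x| ≤ (K : ℝ) := Nat.le_ceil _
  rcases le_or_gt n K with hc | hc
  · calc ‖_‖ ≤ 2 * n * |x| := hhead n
      _ ≤ 2 * K * |x| := by gcongr <;> exact_mod_cast hc
      _ ≤ 2 * (1/|x| + 1) * |x| := by gcongr
      _ = 2 + 2*|x| := by field_simp
      _ ≤ 2 + 4*π := by linarith
  · have hKn : K ≤ n := hc.le
    rw [Finset.range_eq_Ico, ← Finset.sum_Ico_consecutive _ (Nat.zero_le K) hKn]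
    have htail : ‖∑ k ∈ Finset.Ico K n, (((k+1 : ℕ)):ℂ)⁻¹ *
        (Complex.exp ((k+1 : ℕ) * (-x) * I) - Complex.exp ((k+1 : ℕ) * x * I))‖ ≤ 2*π := by
      rw [Finset.sum_Ico_eq_sum_range]
      have hsplit : ∑ j ∈ Finset.range (n - K), (((K+j+1 : ℕ)):ℂ)⁻¹ *
          (Complex.exp ((K+j+1 : ℕ) * (-x) * I) - Complex.exp ((K+j+1 : ℕ) * x * I))
          = (∑ j ∈ Finset.range (n - K), (((K+j+1 : ℕ)):ℂ)⁻¹ *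
              Complex.exp ((K+j+1 : ℕ) * (-x) * I))
            - ∑ j ∈ Finset.range (n - K), (((K+j+1 : ℕ)):ℂ)⁻¹ *
              Complex.exp ((K+j+1 : ℕ) * x * I) := by
        rw [← Finset.sum_sub_distrib]
        exact Finset.sum_congr rfl fun j _ => by ring
      have hbnd : ∀ y : ℝ, y ≠ 0 → |y| = |x| →
          ‖∑ j ∈ Finset.range (n - K), (((K+j+1 : ℕ)):ℂ)⁻¹ *
            Complex.exp ((K+j+1 : ℕ) * y * I)‖ ≤ π := by
        intro y hy0 hyx
        refine (tail_bound y hy0 (hyx ▸ hx) K (n - K)).trans ?_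
        have hlow : 2/π * |x| ≤ ‖Complex.exp (y * I) - 1‖ := by
          have := norm_exp_sub_one_ge y (hyx ▸ hx)
          rwa [hyx] at this
        have hpos : (0:ℝ) < 2/π * |x| := by positivity
        have h2 : 2 / ‖Complex.exp (y * I) - 1‖ ≤ 2 / (2/π * |x|) := by
          gcongr <;> linarith
        have h3 : ((K:ℝ)+1)⁻¹ ≤ |x| := by
          rw [inv_le_comm₀ (by positivity) hxpos]
          rw [one_div] at hKge
          linarith
        calc 2 / ‖Complex.exp (y * I) - 1‖ * ((K:ℝ)+1)⁻¹ ≤ 2 / (2/π * |x|) * |x| := by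
              exact mul_le_mul h2 h3 (by positivity) (by positivity)
          _ = π := by field_simp
      rw [hsplit]
      calc ‖_ - _‖ ≤ ‖∑ j ∈ Finset.range (n - K), (((K+j+1 : ℕ)):ℂ)⁻¹ *
              Complex.exp ((K+j+1 : ℕ) * (-x) * I)‖
            + ‖∑ j ∈ Finset.range (n - K), (((K+j+1 : ℕ)):ℂ)⁻¹ *
              Complex.exp ((K+j+1 : ℕ) * x * I)‖ := norm_sub_le _ _
        _ ≤ π + π := by
              have h1 := hbnd (-x) (neg_ne_zero.mpr hx0) (abs_neg x)
              simp only [Complex.ofReal_neg] at h1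
              exact add_le_add h1 (hbnd x hx0 rfl)
        _ = 2*π := by ring
    calc ‖_ + _‖ ≤ ‖∑ k ∈ Finset.Ico 0 K, (((k+1 : ℕ)):ℂ)⁻¹ *
            (Complex.exp ((k+1 : ℕ) * (-x) * I) - Complex.exp ((k+1 : ℕ) * x * I))‖
          + ‖∑ k ∈ Finset.Ico K n, (((k+1 : ℕ)):ℂ)⁻¹ *
            (Complex.exp ((k+1 : ℕ) * (-x) * I) - Complex.exp ((k+1 : ℕ) * x * I))‖ :=
          norm_add_le _ _
      _ ≤ 2 * K * |x| + 2*π := by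
          refine add_le_add ?_ htail
          rw [← Finset.range_eq_Ico]
          exact hhead K
      _ ≤ 2 * (1/|x| + 1) * |x| + 2*π := by gcongr
      _ = 2 + 2*|x| + 2*π := by field_simp
      _ ≤ 2 + 4*π := by linarith

lemma coeff_eq (f : C(UnitCircle, ℂ)) (k : ℤ) :
    fourierCoeff ⇑f k =
      fourierBasis.repr (ContinuousMap.toLp (E := ℂ) 2 haarAddCircle ℂ f) k := by
  rw [fourierBasis_repr, fourierCoeff_toLp]

lemma coeff_fourier (m k : ℤ) :
    fourierCoeff (⇑(fourier m : C(UnitCircle, ℂ))) k = if k = m then 1 else 0 := by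
  classical
  rw [coeff_eq]
  have h1 : (ContinuousMap.toLp (E := ℂ) 2 haarAddCircle ℂ (fourier m))
      = fourierBasis (T := 2 * Real.pi) m := by
    rw [coe_fourierBasis]
  rw [h1, fourierBasis.repr_self m, lp.single_apply]
  split_ifs with h <;> simp [h]

lemma coeff_add (f g : C(UnitCircle, ℂ)) (k : ℤ) :
    fourierCoeff ⇑(f + g) k = fourierCoeff ⇑f k + fourierCoeff ⇑g k := by
  simp only [coeff_eq, map_add]
  simp [lp.coeFn_add]

lemma coeff_smul (a : ℂ) (f : C(UnitCircle, ℂ)) (k : ℤ) :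
    fourierCoeff ⇑(a • f) k = a * fourierCoeff ⇑f k := by
  rw [coeff_eq, coeff_eq, _root_.map_smul, _root_.map_smul]
  simp [lp.coeFn_smul]

lemma coeff_sub (f g : C(UnitCircle, ℂ)) (k : ℤ) :
    fourierCoeff ⇑(f - g) k = fourierCoeff ⇑f k - fourierCoeff ⇑g k := by
  simp only [coeff_eq, map_sub]
  simp [lp.coeFn_sub]

lemma coeff_sum {ι : Type*} (s : Finset ι) (F : ι → C(UnitCircle, ℂ)) (k : ℤ) :
    fourierCoeff ⇑(∑ i ∈ s, F i) k = ∑ i ∈ s, fourierCoeff ⇑(F i) k := by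
  classical
  induction s using Finset.induction_on with
  | empty =>
      simp only [Finset.sum_empty]
      rw [coeff_eq]
      simp
  | insert i s hi ih =>
      rw [Finset.sum_insert hi, Finset.sum_insert hi, coeff_add, ih]

lemma partialSum_apply_zero (F : UnitCircle → ℂ) (n : ℕ) :
    partialSum n F 0 = ∑ k ∈ Finset.Icc (-(n : ℤ)) (n : ℤ), fourierCoeff F k := by
  rw [partialSum]
  rw [ContinuousMap.sum_apply]
  exact Finset.sum_congr rfl fun k _ => by
    rw [ContinuousMap.smul_apply, fourier_eval_zero, smul_eq_mul, mul_one]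

lemma fourier_apply_real (m : ℤ) (x : ℝ) :
    (fourier m : C(UnitCircle, ℂ)) (↑x) = Complex.exp ((m:ℂ) * x * I) := by
  rw [fourier_coe_apply]
  congr 1
  have hπ : (Real.pi : ℂ) ≠ 0 := by exact_mod_cast Real.pi_ne_zero
  push_cast
  field_simp

end Aux
section Main

open Real Finset AddCircle

/-- For every infinite `Λ ⊆ ℕ`, `g ∈ C(𝕋)`, `c ∈ ℂ`, `ε > 0`, there exist `f ∈ C(𝕋)` and
`n ∈ Λ` with `‖f - g‖ < ε` and `sₙ f (0) = c`. -/
theorem stmt6 (Λ : Set ℕ) (hΛ : Λ.Infinite) (g : C(UnitCircle, ℂ)) (c : ℂ) (ε : ℝ)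
    (hε : 0 < ε) :
    ∃ f : C(UnitCircle, ℂ), ∃ n ∈ Λ, ‖f - g‖ < ε ∧ partialSum n ⇑f 0 = c := by
  classical
  have hπ : 0 < π := Real.pi_pos
  -- Step 1: trigonometric polynomial approximation
  have hg : g ∈ closure ((Submodule.span ℂ (Set.range (@fourier (2*Real.pi)))) :
      Set C(UnitCircle, ℂ)) := by
    rw [← Submodule.topologicalClosure_coe, span_fourier_closure_eq_top]
    simp
  obtain ⟨p, hpmem, hpg⟩ := Metric.mem_closure_iff.mp hg (ε/2) (by positivity)
  obtain ⟨w, hw⟩ := Finsupp.mem_span_range_iff_exists_finsupp.mp hpmem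
  set d := w.support.sup Int.natAbs with hd
  -- Step 2: choose n
  set Tgt := 2*(2+4*π)*(‖c - p 0‖+1)/ε with hTgt
  have hTgtpos : 0 < Tgt := by positivity
  obtain ⟨M, hM⟩ := Filter.eventually_atTop.mp
    (Real.tendsto_sum_range_one_div_nat_succ_atTop.eventually_ge_atTop Tgt)
  obtain ⟨n, hnΛ, hn⟩ := hΛ.exists_gt (max M d)
  have hMn : M ≤ n := le_of_lt (lt_of_le_of_lt (le_max_left _ _) hn)
  have hdn : d < n := lt_of_le_of_lt (le_max_right _ _) hn
  set HR := ∑ i ∈ Finset.range n, (1/((i:ℝ)+1)) with hHR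
  have hHRge : Tgt ≤ HR := hM n hMn
  have hHRpos : 0 < HR := lt_of_lt_of_le hTgtpos hHRge
  set Hc := ∑ k ∈ Finset.range n, (((k+1 : ℕ)):ℂ)⁻¹ with hHc
  have hHcR : Hc = (HR : ℂ) := by
    rw [hHc, hHR]
    push_cast
    exact Finset.sum_congr rfl fun k _ => by rw [one_div]
  have hHc0 : Hc ≠ 0 := by
    rw [hHcR]
    exact_mod_cast ne_of_gt hHRpos
  -- Step 3: the perturbation q
  set q : C(UnitCircle, ℂ) := ∑ k ∈ Finset.range n, (((k+1 : ℕ)):ℂ)⁻¹ •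
    ((fourier ((n:ℤ) - ((k:ℤ)+1))) - fourier ((n:ℤ) + ((k:ℤ)+1))) with hq
  -- norm bound for q
  have hqnorm : ‖q‖ ≤ 2 + 4*π := by
    rw [ContinuousMap.norm_le _ (by positivity)]
    intro z
    set x : ℝ := ((AddCircle.equivIoc (2*π) (-π) z : ℝ)) with hxdef
    have hxmem : x ∈ Set.Ioc (-π) (-π + 2*π) := (AddCircle.equivIoc (2*π) (-π) z).2
    have hxz : ((x : ℝ) : UnitCircle) = z := by
      have h := (AddCircle.equivIoc (2*π) (-π)).symm_apply_apply z
      exact h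
    have hx : |x| ≤ π := abs_le.mpr ⟨by linarith [hxmem.1], by linarith [hxmem.2]⟩
    rw [← hxz]
    have hqx : q ((x : ℝ) : UnitCircle) = Complex.exp ((n:ℂ) * x * I) *
        ∑ k ∈ Finset.range n, (((k+1 : ℕ)):ℂ)⁻¹ *
          (Complex.exp ((k+1 : ℕ) * (-x) * I) - Complex.exp ((k+1 : ℕ) * x * I)) := by
      rw [hq, ContinuousMap.sum_apply, Finset.mul_sum]
      refine Finset.sum_congr rfl fun k _ => ?_
      rw [ContinuousMap.smul_apply, ContinuousMap.sub_apply, fourier_apply_real,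
        fourier_apply_real, smul_eq_mul]
      rw [show Complex.exp ((n:ℂ) * x * I) * ((((k+1 : ℕ)):ℂ)⁻¹ *
          (Complex.exp ((k+1 : ℕ) * (-x) * I) - Complex.exp ((k+1 : ℕ) * x * I)))
          = (((k+1 : ℕ)):ℂ)⁻¹ *
          (Complex.exp ((n:ℂ) * x * I) * Complex.exp ((k+1 : ℕ) * (-x) * I)
            - Complex.exp ((n:ℂ) * x * I) * Complex.exp ((k+1 : ℕ) * x * I)) by ring]
      rw [← Complex.exp_add, ← Complex.exp_add]
      congr 2
      · push_cast; ring
      · push_cast; ring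
    rw [hqx, norm_mul]
    have h1 : ‖Complex.exp ((n:ℂ) * x * I)‖ = 1 := by
      rw [show (n:ℂ) * x * I = (((n * x : ℝ)):ℂ) * I by push_cast; ring]
      exact Complex.norm_exp_ofReal_mul_I _
    rw [h1, one_mul]
    exact key x hx n
  -- coefficient sums
  have hsupp : ∀ i ∈ w.support, i ∈ Finset.Icc (-(n:ℤ)) (n:ℤ) := by
    intro i hi
    have h1 : i.natAbs ≤ d := Finset.le_sup (f := Int.natAbs) hi
    rw [Finset.mem_Icc]
    omega
  have hcoeffp : ∀ m : ℤ, fourierCoeff ⇑p m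
      = ∑ i ∈ w.support, w i * (if m = i then 1 else 0) := by
    intro m
    rw [← hw, Finsupp.sum, coeff_sum]
    exact Finset.sum_congr rfl fun i _ => by rw [coeff_smul, coeff_fourier]
  have hp0 : p 0 = ∑ i ∈ w.support, w i := by
    rw [← hw, Finsupp.sum, ContinuousMap.sum_apply]
    exact Finset.sum_congr rfl fun i _ => by
      rw [ContinuousMap.smul_apply, fourier_eval_zero, smul_eq_mul, mul_one]
  have hsump : ∑ m ∈ Finset.Icc (-(n:ℤ)) (n:ℤ), fourierCoeff ⇑p m = p 0 := by
    rw [hp0, Finset.sum_congr rfl fun m _ => hcoeffp m, Finset.sum_comm]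
    refine Finset.sum_congr rfl fun i hi => ?_
    have hiIcc : i ∈ Finset.Icc (-(n:ℤ)) (n:ℤ) := hsupp i hi
    simp [mul_ite, mul_one, mul_zero, Finset.sum_ite_eq', hiIcc]
  have hcoeffq : ∀ m : ℤ, fourierCoeff ⇑q m = ∑ k ∈ Finset.range n, (((k+1 : ℕ)):ℂ)⁻¹ *
      ((if m = (n:ℤ) - ((k:ℤ)+1) then 1 else 0) - (if m = (n:ℤ) + ((k:ℤ)+1) then 1 else 0)) := by
    intro m
    rw [hq, coeff_sum]
    exact Finset.sum_congr rfl fun k _ => by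
      rw [coeff_smul, coeff_sub, coeff_fourier, coeff_fourier]
  have hsumq : ∑ m ∈ Finset.Icc (-(n:ℤ)) (n:ℤ), fourierCoeff ⇑q m = Hc := by
    rw [Finset.sum_congr rfl fun m _ => hcoeffq m, Finset.sum_comm, hHc]
    refine Finset.sum_congr rfl fun k hk => ?_
    have hk' : k < n := Finset.mem_range.mp hk
    have h1 : (n:ℤ) - ((k:ℤ)+1) ∈ Finset.Icc (-(n:ℤ)) (n:ℤ) := by
      rw [Finset.mem_Icc]; omega
    have h2 : (n:ℤ) + ((k:ℤ)+1) ∉ Finset.Icc (-(n:ℤ)) (n:ℤ) := by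
      rw [Finset.mem_Icc]; omega
    simp only [mul_sub, mul_ite, mul_one, mul_zero, Finset.sum_sub_distrib,
      Finset.sum_ite_eq', if_pos h1, if_neg h2, sub_zero]
  -- Step 4: assemble
  set a := (c - p 0)/Hc with ha
  refine ⟨p + a • q, n, hnΛ, ?_, ?_⟩
  · have hre : p + a • q - g = (p - g) + a • q := by abel
    rw [hre]
    have e1 : ‖p - g‖ < ε/2 := by rw [← dist_eq_norm, dist_comm]; exact hpg
    have e2 : ‖a • q‖ < ε/2 := by
      have hdiv : (0:ℝ) ≤ ‖c - p 0‖ / HR := div_nonneg (norm_nonneg _) hHRpos.le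
      have hb : ‖a‖ * ‖q‖ ≤ ‖c - p 0‖ / HR * (2+4*π) := by
        have hna : ‖a‖ = ‖c - p 0‖ / HR := by
          rw [ha, hHcR, norm_div, Complex.norm_real, Real.norm_eq_abs,
            _root_.abs_of_pos hHRpos]
        rw [hna]
        exact mul_le_mul_of_nonneg_left hqnorm hdiv
      rw [norm_smul]
      refine lt_of_le_of_lt hb ?_
      rw [div_mul_eq_mul_div, div_lt_iff₀ hHRpos]
      have h5 : ε/2 * Tgt ≤ ε/2 * HR := mul_le_mul_of_nonneg_left hHRge (by linarith)
      have h4 : ε/2 * Tgt = (2+4*π)*(‖c - p 0‖+1) := by rw [hTgt]; field_simp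
      nlinarith [norm_nonneg (c - p 0), hπ]
    calc ‖(p - g) + a • q‖ ≤ ‖p - g‖ + ‖a • q‖ := norm_add_le _ _
      _ < ε/2 + ε/2 := add_lt_add e1 e2
      _ = ε := add_halves ε
  · have hco : ∀ m ∈ Finset.Icc (-(n:ℤ)) (n:ℤ), fourierCoeff ⇑(p + a • q) m
        = fourierCoeff ⇑p m + a * fourierCoeff ⇑q m :=
      fun m _ => by rw [coeff_add, coeff_smul]
    rw [partialSum_apply_zero, Finset.sum_congr rfl hco, Finset.sum_add_distrib, hsump,
      ← Finset.mul_sum, hsumq, ha]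
    field_simp
    ring



end Main
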